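/- For every m ∈ (0,1), the ratio μ = E(m)/K(m) of complete elliptic integrals satisfies μ < 1 and 3(μ − 1)² ≤ 2 + m − 2(1+m)·μ ≤ (9/2)·(μ − 1)². Equivalently, the kurtosis κ(m) = (2 + m − 2(1+m)μ)/(3(μ−1)²) of the genus one defocusing NLS soliton condensate satisfies 1 ≤ κ(m) ≤ 3/2. -/

import Mathlib

open Real

/-- Complete elliptic integral of the second kind with parameter `m`. -/
noncomputable def ellipticE (m : ℝ) : ℝ :=
  ∫ y in (0:ℝ)..(π / 2), Real.sqrt (1 - m * Real.sin y ^ 2)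

/-- Complete elliptic integral of the first kind with parameter `m`. -/
noncomputable def ellipticK (m : ℝ) : ℝ :=
  ∫ y in (0:ℝ)..(π / 2), 1 / Real.sqrt (1 - m * Real.sin y ^ 2)

open intervalIntegral MeasureTheory

namespace KurtosisAux

lemma wallis2 : ∫ y in (0:ℝ)..(π/2), sin y^2 = π/4 := by
  rw [integral_sin_sq]; simp; ring

lemma wallis4 : ∫ y in (0:ℝ)..(π/2), sin y^4 = 3*π/16 := by
  have h := integral_sin_pow (a := 0) (b := π/2) 2
  rw [show (2:ℕ)+2 = 4 from rfl] at h
  rw [h, wallis2]; simp; ring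

lemma wallis6 : ∫ y in (0:ℝ)..(π/2), sin y^6 = 5*π/32 := by
  have h := integral_sin_pow (a := 0) (b := π/2) 4
  rw [show (4:ℕ)+2 = 6 from rfl] at h
  rw [h, wallis4]; simp; ring

lemma wallis8 : ∫ y in (0:ℝ)..(π/2), sin y^8 = 35*π/256 := by
  have h := integral_sin_pow (a := 0) (b := π/2) 6
  rw [show (6:ℕ)+2 = 8 from rfl] at h
  rw [h, wallis6]; simp; ring

lemma intpoly (a b c d e : ℝ) :
    ∫ y in (0:ℝ)..(π/2), (a + b * sin y^2 + c * sin y^4 + d * sin y^6 + e * sin y^8)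
      = a*(π/2) + b*(π/4) + c*(3*π/16) + d*(5*π/32) + e*(35*π/256) := by
  have i1 : IntervalIntegrable (fun y : ℝ => a + b * sin y^2 + c * sin y^4 + d * sin y^6) MeasureTheory.volume 0 (π/2) := by
    apply Continuous.intervalIntegrable; fun_prop
  have i2 : IntervalIntegrable (fun y : ℝ => e * sin y^8) MeasureTheory.volume 0 (π/2) := by
    apply Continuous.intervalIntegrable; fun_prop
  have i3 : IntervalIntegrable (fun y : ℝ => a + b * sin y^2 + c * sin y^4) MeasureTheory.volume 0 (π/2) := by
    apply Continuous.intervalIntegrable; fun_prop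
  have i4 : IntervalIntegrable (fun y : ℝ => d * sin y^6) MeasureTheory.volume 0 (π/2) := by
    apply Continuous.intervalIntegrable; fun_prop
  have i5 : IntervalIntegrable (fun y : ℝ => a + b * sin y^2) MeasureTheory.volume 0 (π/2) := by
    apply Continuous.intervalIntegrable; fun_prop
  have i6 : IntervalIntegrable (fun y : ℝ => c * sin y^4) MeasureTheory.volume 0 (π/2) := by
    apply Continuous.intervalIntegrable; fun_prop
  have i7 : IntervalIntegrable (fun y : ℝ => (a:ℝ)) MeasureTheory.volume 0 (π/2) := by
    apply Continuous.intervalIntegrable; fun_prop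
  have i8 : IntervalIntegrable (fun y : ℝ => b * sin y^2) MeasureTheory.volume 0 (π/2) := by
    apply Continuous.intervalIntegrable; fun_prop
  rw [integral_add i1 i2, integral_add i3 i4, integral_add i5 i6, integral_add i7 i8,
      intervalIntegral.integral_const_mul, intervalIntegral.integral_const_mul, intervalIntegral.integral_const_mul, intervalIntegral.integral_const_mul,
      wallis2, wallis4, wallis6, wallis8]
  simp; ring

lemma ptid (m t c s : ℝ) (hs2 : s^2 = 1 - m*t) (hs0 : s ≠ 0) (hpy : t + c = 1) :
    3 * ((1 - m*t) * s) - 2*(2-m) * s + (1-m) * (1/s)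
      = m * ((c - t) * s - m*t*c/s) := by
  field_simp
  linear_combination (3*(1 - m*t) - 4 + 2*m - m*(c - t)) * hs2 - m*(1 - 2*m*t) * hpy

lemma csid (u w s : ℝ) (hs2 : s^2 = w) (hs0 : s ≠ 0) :
    (u - w)^2 / s = u^2 * (1/s) - 2*u*s + w*s := by
  field_simp
  linear_combination (2*u - w) * hs2

/-- certificate: upper polynomial bound for `(1-x)^(-1/2)` on `[0,1/2]`. -/
lemma certC1 (x : ℝ) (h0 : 0 ≤ x) (h2 : 2*x ≤ 1) :
    1 ≤ (1 + x/2 + 3*x^2/8 + 5*x^3/16 + 35*x^4/64)^2 * (1-x) := by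
  have hy : (0:ℝ) ≤ 1 - 2*x := by linarith
  linarith [mul_nonneg (pow_nonneg h0 4) (pow_nonneg hy 5),
    mul_nonneg (pow_nonneg h0 5) (pow_nonneg hy 4),
    mul_nonneg (pow_nonneg h0 6) (pow_nonneg hy 3),
    mul_nonneg (pow_nonneg h0 7) (pow_nonneg hy 2),
    mul_nonneg (pow_nonneg h0 8) (pow_nonneg hy 1),
    pow_nonneg h0 9]

/-- certificate: lower polynomial bound for `sqrt (1-x)` on `[0,1/2]`: nonnegativity. -/
lemma certQ0 (x : ℝ) (h0 : 0 ≤ x) (h2 : 2*x ≤ 1) :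
    0 ≤ 1 - x/2 - x^2/8 - x^3/16 - 5*x^4/64 := by
  have hy : (0:ℝ) ≤ 1 - 2*x := by linarith
  linarith [mul_nonneg (pow_nonneg h0 0) (pow_nonneg hy 4),
    mul_nonneg (pow_nonneg h0 1) (pow_nonneg hy 3),
    mul_nonneg (pow_nonneg h0 2) (pow_nonneg hy 2),
    mul_nonneg (pow_nonneg h0 3) (pow_nonneg hy 1),
    pow_nonneg h0 4]

/-- certificate: lower polynomial bound for `sqrt (1-x)` on `[0,1/2]`: square bound. -/
lemma certC2 (x : ℝ) (h0 : 0 ≤ x) (h2 : 2*x ≤ 1) :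
    (1 - x/2 - x^2/8 - x^3/16 - 5*x^4/64)^2 ≤ 1 - x := by
  have hy : (0:ℝ) ≤ 1 - 2*x := by linarith
  linarith [mul_nonneg (pow_nonneg h0 4) (pow_nonneg hy 4),
    mul_nonneg (pow_nonneg h0 5) (pow_nonneg hy 3),
    mul_nonneg (pow_nonneg h0 6) (pow_nonneg hy 2),
    mul_nonneg (pow_nonneg h0 7) (pow_nonneg hy 1),
    pow_nonneg h0 8]

/-- pointwise upper bound for `1/sqrt (1-x)` on `[0,1/2]`. -/
lemma ptup (x : ℝ) (h0 : 0 ≤ x) (h2 : 2*x ≤ 1) :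
    1 / sqrt (1-x) ≤ 1 + x/2 + 3*x^2/8 + 5*x^3/16 + 35*x^4/64 := by
  have hw : (0:ℝ) < 1 - x := by linarith
  have hs : 0 < sqrt (1-x) := Real.sqrt_pos.2 hw
  have hs2 : sqrt (1-x)^2 = 1-x := Real.sq_sqrt hw.le
  have hP : (0:ℝ) < 1 + x/2 + 3*x^2/8 + 5*x^3/16 + 35*x^4/64 := by positivity
  rw [div_le_iff₀ hs]
  have h1 : 1 ≤ ((1 + x/2 + 3*x^2/8 + 5*x^3/16 + 35*x^4/64) * sqrt (1-x))^2 := by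
    rw [mul_pow, hs2]
    exact certC1 x h0 h2
  nlinarith [mul_pos hP hs, h1]

/-- pointwise lower bound for `sqrt (1-x)` on `[0,1/2]`. -/
lemma ptlow (x : ℝ) (h0 : 0 ≤ x) (h2 : 2*x ≤ 1) :
    1 - x/2 - x^2/8 - x^3/16 - 5*x^4/64 ≤ sqrt (1-x) := by
  have hw : (0:ℝ) ≤ 1 - x := by linarith
  exact (Real.le_sqrt (certQ0 x h0 h2) hw).2 (certC2 x h0 h2)

/-- certificate A: `(7-2m)·P(m) ≤ 9·Q(m)` on `[0,1/2]`. -/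
lemma certA (x : ℝ) (h0 : 0 ≤ x) (h2 : 2*x ≤ 1) :
    (7-2*x) * (1 + x/4 + 9*x^2/64 + 25*x^3/256 + 1225*x^4/8192)
      ≤ 9 * (1 - x/4 - 3*x^2/64 - 5*x^3/256 - 175*x^4/8192) := by
  have hy : (0:ℝ) ≤ 1 - 2*x := by linarith
  linarith [mul_nonneg (pow_nonneg h0 0) (pow_nonneg hy 5),
    mul_nonneg (pow_nonneg h0 1) (pow_nonneg hy 4),
    mul_nonneg (pow_nonneg h0 2) (pow_nonneg hy 3),
    mul_nonneg (pow_nonneg h0 3) (pow_nonneg hy 2),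
    mul_nonneg (pow_nonneg h0 4) (pow_nonneg hy 1),
    pow_nonneg h0 5]

/-- certificate B: discriminant bound on `[0,1/2]`. -/
lemma certB (x : ℝ) (h0 : 0 ≤ x) (h2 : 2*x ≤ 1) :
    (4*x^2-10*x+4) * (1 + x/4 + 9*x^2/64 + 25*x^3/256 + 1225*x^4/8192)^2
      ≤ (9 * (1 - x/4 - 3*x^2/64 - 5*x^3/256 - 175*x^4/8192)
          - (7-2*x) * (1 + x/4 + 9*x^2/64 + 25*x^3/256 + 1225*x^4/8192))^2 := by
  have hy : (0:ℝ) ≤ 1 - 2*x := by linarith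
  linarith [mul_nonneg (pow_nonneg h0 3) (pow_nonneg hy 7),
    mul_nonneg (pow_nonneg h0 4) (pow_nonneg hy 6),
    mul_nonneg (pow_nonneg h0 5) (pow_nonneg hy 5),
    mul_nonneg (pow_nonneg h0 6) (pow_nonneg hy 4),
    mul_nonneg (pow_nonneg h0 7) (pow_nonneg hy 3),
    mul_nonneg (pow_nonneg h0 8) (pow_nonneg hy 2),
    mul_nonneg (pow_nonneg h0 9) (pow_nonneg hy 1),
    pow_nonneg h0 10]

end KurtosisAux

open KurtosisAux

set_option maxHeartbeats 2000000 in
/-- For every `m ∈ (0,1)`, `μ = E(m)/K(m)` satisfies `μ < 1` and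
`3(μ − 1)² ≤ 2 + m − 2(1+m)μ ≤ (9/2)(μ − 1)²`; equivalently the kurtosis
`κ(m) = (2 + m − 2(1+m)μ)/(3(μ−1)²)` satisfies `1 ≤ κ(m) ≤ 3/2`. -/
theorem kurtosis_bounds (m : ℝ) (hm : m ∈ Set.Ioo (0:ℝ) 1) :
    ellipticE m / ellipticK m < 1 ∧
    3 * (ellipticE m / ellipticK m - 1) ^ 2
      ≤ 2 + m - 2 * (1 + m) * (ellipticE m / ellipticK m) ∧
    2 + m - 2 * (1 + m) * (ellipticE m / ellipticK m)
      ≤ (9 / 2) * (ellipticE m / ellipticK m - 1) ^ 2 := by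
  obtain ⟨hm0, hm1⟩ := hm
  have hab : (0:ℝ) ≤ π/2 := by positivity
  have hwpos : ∀ y : ℝ, 0 < 1 - m * sin y ^ 2 := by
    intro y; nlinarith [sin_sq_le_one y, sq_nonneg (sin y)]
  have hw1 : ∀ y : ℝ, 1 - m * sin y ^ 2 ≤ 1 := by
    intro y; nlinarith [sq_nonneg (sin y)]
  have hspos : ∀ y : ℝ, 0 < sqrt (1 - m * sin y ^ 2) := fun y => Real.sqrt_pos.2 (hwpos y)
  have hsle1 : ∀ y : ℝ, sqrt (1 - m * sin y ^ 2) ≤ 1 := fun y => Real.sqrt_le_one.mpr (hw1 y)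
  have hcw : Continuous fun y : ℝ => 1 - m * sin y ^ 2 := by continuity
  have hcs : Continuous fun y : ℝ => sqrt (1 - m * sin y ^ 2) := hcw.sqrt
  have hcK : Continuous fun y : ℝ => 1 / sqrt (1 - m * sin y ^ 2) :=
    continuous_const.div hcs fun y => ne_of_gt (hspos y)
  have hiE : IntervalIntegrable (fun y : ℝ => sqrt (1 - m * sin y^2)) volume 0 (π/2) :=
    hcs.intervalIntegrable _ _
  have hiK : IntervalIntegrable (fun y : ℝ => 1 / sqrt (1 - m * sin y^2)) volume 0 (π/2) :=
    hcK.intervalIntegrable _ _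
  have hiI : IntervalIntegrable (fun y : ℝ => (1 - m * sin y^2) * sqrt (1 - m * sin y^2))
      volume 0 (π/2) := (hcw.mul hcs).intervalIntegrable _ _
  set E := ellipticE m with hEdef
  set K := ellipticK m with hKdef
  have hEint : E = ∫ y in (0:ℝ)..(π/2), sqrt (1 - m * sin y^2) := rfl
  have hKint : K = ∫ y in (0:ℝ)..(π/2), 1 / sqrt (1 - m * sin y^2) := rfl
  set I3 : ℝ := ∫ y in (0:ℝ)..(π/2), (1 - m * sin y^2) * sqrt (1 - m * sin y^2) with hI3def
  -- K ≥ π/2 > 0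
  have hKge : π/2 ≤ K := by
    have h1 : ∫ y in (0:ℝ)..(π/2), (1:ℝ) = π/2 := by simp
    have h2 : (∫ y in (0:ℝ)..(π/2), (1:ℝ)) ≤ K := by
      rw [hKint]
      apply integral_mono_on hab (by apply Continuous.intervalIntegrable; fun_prop) hiK
      intro y _
      rw [le_div_iff₀ (hspos y), one_mul]
      exact hsle1 y
    linarith
  have hKpos : 0 < K := lt_of_lt_of_le (by positivity) hKge
  -- K - E ≥ m π/4 > 0
  have hKE : m * (π/4) ≤ K - E := by
    have hsub : K - E = ∫ y in (0:ℝ)..(π/2),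
        (1 / sqrt (1 - m * sin y^2) - sqrt (1 - m * sin y^2)) := by
      rw [hKint, hEint, integral_sub hiK hiE]
    have hmono : ∫ y in (0:ℝ)..(π/2), m * sin y^2 ≤ ∫ y in (0:ℝ)..(π/2),
        (1 / sqrt (1 - m * sin y^2) - sqrt (1 - m * sin y^2)) := by
      apply integral_mono_on hab (by apply Continuous.intervalIntegrable; fun_prop)
        (hiK.sub hiE)
      intro y _
      have hs0 := hspos y
      have hs2 : sqrt (1 - m * sin y^2)^2 = 1 - m * sin y^2 := Real.sq_sqrt (hwpos y).le
      have hdiv : 1 / sqrt (1 - m * sin y^2) - sqrt (1 - m * sin y^2)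
          = m * sin y^2 / sqrt (1 - m * sin y^2) := by
        field_simp
        linear_combination -hs2
      rw [hdiv, le_div_iff₀ hs0]
      have : 0 ≤ m * sin y^2 := by positivity
      nlinarith [hsle1 y]
    rw [hsub.symm] at hmono
    have hval2 : ∫ y in (0:ℝ)..(π/2), m * sin y^2 = m * (π/4) := by
      rw [intervalIntegral.integral_const_mul, wallis2]
    linarith [hmono]
  have hEltK : E < K := by nlinarith [pi_pos]
  have goal1 : E / K < 1 := (div_lt_one hKpos).2 hEltK
  -- identity for I3
  have hI3 : 3 * I3 = 2*(2-m) * E - (1-m) * K := by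
    set D : ℝ → ℝ := fun y => (cos y * cos y - sin y * sin y) * sqrt (1 - m * sin y ^ 2)
        + (sin y * cos y) * (-(m * (2 * sin y * cos y)) / (2 * sqrt (1 - m * sin y ^ 2))) with hD
    have hcD : Continuous D := by
      apply Continuous.add
      · exact ((continuous_cos.mul continuous_cos).sub (continuous_sin.mul continuous_sin)).mul hcs
      · exact (continuous_sin.mul continuous_cos).mul
          ((((continuous_const.mul ((continuous_const.mul continuous_sin).mul continuous_cos))).neg).div
            (continuous_const.mul hcs) (fun y => by
              have := hspos y; positivity))
    have hderiv : ∀ y ∈ Set.uIcc (0:ℝ) (π/2),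
        HasDerivAt (fun t => sin t * cos t * sqrt (1 - m * sin t ^ 2)) (D y) y := by
      intro y _
      have h1 : HasDerivAt (fun t => sin t * cos t) (cos y * cos y + sin y * -sin y) y :=
        (hasDerivAt_sin y).mul (hasDerivAt_cos y)
      have hsq : HasDerivAt (fun t => sin t ^ 2) (2 * sin y ^ (2-1) * cos y) y :=
        (hasDerivAt_sin y).pow 2
      have h2 : HasDerivAt (fun t => 1 - m * sin t ^ 2) (-(m * (2 * sin y * cos y))) y := by
        have := (hsq.const_mul m).const_sub 1
        simpa [pow_one, mul_assoc, mul_comm, mul_left_comm] using this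
      have h3 := h2.sqrt (ne_of_gt (hwpos y))
      have : HasDerivAt (fun t => sin t * cos t * sqrt (1 - m * sin t ^ 2)) _ y := h1.mul h3
      rw [hD]
      convert this using 1
      ring
    have hDint : ∫ y in (0:ℝ)..(π/2), D y = 0 := by
      rw [integral_eq_sub_of_hasDerivAt hderiv (hcD.intervalIntegrable _ _)]
      simp
    have hpt : ∀ y : ℝ, 3 * ((1 - m * sin y^2) * sqrt (1 - m * sin y^2))
        - 2*(2-m) * sqrt (1 - m * sin y^2) + (1-m) * (1 / sqrt (1 - m * sin y^2)) = m * D y := by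
      intro y
      have h := ptid m (sin y^2) (cos y^2) (sqrt (1 - m * sin y^2))
        (Real.sq_sqrt (hwpos y).le) (ne_of_gt (hspos y)) (sin_sq_add_cos_sq y)
      rw [hD, h]
      ring
    have hsplit : ∫ y in (0:ℝ)..(π/2), (3 * ((1 - m * sin y^2) * sqrt (1 - m * sin y^2))
        - 2*(2-m) * sqrt (1 - m * sin y^2) + (1-m) * (1 / sqrt (1 - m * sin y^2)))
        = 3 * I3 - 2*(2-m) * E + (1-m) * K := by
      rw [hI3def, hEint, hKint,
          integral_add ((hiI.const_mul 3).sub (hiE.const_mul (2*(2-m)))) (hiK.const_mul (1-m)),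
          integral_sub (hiI.const_mul 3) (hiE.const_mul (2*(2-m))),
          intervalIntegral.integral_const_mul, intervalIntegral.integral_const_mul, intervalIntegral.integral_const_mul]
    have hzero : ∫ y in (0:ℝ)..(π/2), (3 * ((1 - m * sin y^2) * sqrt (1 - m * sin y^2))
        - 2*(2-m) * sqrt (1 - m * sin y^2) + (1-m) * (1 / sqrt (1 - m * sin y^2))) = 0 := by
      rw [integral_congr (g := fun y => m * D y) (fun y _ => hpt y), intervalIntegral.integral_const_mul, hDint,
        mul_zero]
    rw [hsplit] at hzero
    linarith
  -- Cauchy-Schwarz : E^2 ≤ I3 * K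
  have hCS : E^2 ≤ I3 * K := by
    set u : ℝ := E / K with hu
    have hnn : 0 ≤ ∫ y in (0:ℝ)..(π/2), (u - (1 - m * sin y^2))^2 / sqrt (1 - m * sin y^2) := by
      apply integral_nonneg hab
      intro y _
      positivity
    have hval : ∫ y in (0:ℝ)..(π/2), (u - (1 - m * sin y^2))^2 / sqrt (1 - m * sin y^2)
        = u^2 * K - 2*u * E + I3 := by
      rw [integral_congr (g := fun y => u^2 * (1 / sqrt (1 - m * sin y^2))
          - 2*u * sqrt (1 - m * sin y^2) + (1 - m * sin y^2) * sqrt (1 - m * sin y^2))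
          (fun y _ => by
            have h := csid u (1 - m * sin y^2) (sqrt (1 - m * sin y^2))
              (Real.sq_sqrt (hwpos y).le) (ne_of_gt (hspos y))
            exact h)]
      rw [hI3def, hEint, hKint,
          integral_add ((hiK.const_mul (u^2)).sub (hiE.const_mul (2*u))) hiI,
          integral_sub (hiK.const_mul (u^2)) (hiE.const_mul (2*u)),
          intervalIntegral.integral_const_mul, intervalIntegral.integral_const_mul]
    rw [hval] at hnn
    have hEuK : E = u * K := by
      rw [hu]; field_simp
    nlinarith [hnn, hKpos]
  -- lower bound
  have key : 3*E^2 + (2*m-4)*E*K + (1-m)*K^2 ≤ 0 := by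
    have h5 : 3*(I3*K) = 2*(2-m)*E*K - (1-m)*K^2 := by linear_combination K * hI3
    nlinarith [hCS, hKpos]
  have goal2 : 3 * (E / K - 1) ^ 2 ≤ 2 + m - 2 * (1 + m) * (E / K) := by
    set u : ℝ := E / K with hu
    have hEuK : E = u * K := by rw [hu]; field_simp
    have h7 : (3*u^2 + (2*m-4)*u + (1-m)) * K^2 ≤ 0 * K^2 := by
      rw [hEuK] at key
      nlinarith [key]
    have h8 : 3*u^2 + (2*m-4)*u + (1-m) ≤ 0 :=
      le_of_mul_le_mul_right (by simpa using h7) (by positivity)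
    linarith [h8]
  refine ⟨goal1, goal2, ?_⟩
  -- upper bound
  by_cases hc : (1:ℝ)/2 ≤ m
  · set u : ℝ := E / K with hu
    nlinarith [sq_nonneg (9*u + 2*m - 7),
      mul_nonneg (by linarith : (0:ℝ) ≤ 2*m-1) (by linarith : (0:ℝ) ≤ 2-m)]
  · push_neg at hc
    have hm2 : 2*m ≤ 1 := by linarith
    -- polynomial bounds on K and E
    have hKb : K ≤ π/2 * (1 + m/4 + 9*m^2/64 + 25*m^3/256 + 1225*m^4/8192) := by
      have hmono : K ≤ ∫ y in (0:ℝ)..(π/2), (1 + (m*sin y^2)/2 + 3*(m*sin y^2)^2/8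
          + 5*(m*sin y^2)^3/16 + 35*(m*sin y^2)^4/64) := by
        rw [hKint]
        apply integral_mono_on hab hiK (by apply Continuous.intervalIntegrable; fun_prop)
        intro y _
        have h0x : 0 ≤ m * sin y^2 := by positivity
        have h2x : 2*(m * sin y^2) ≤ 1 := by nlinarith [sin_sq_le_one y, sq_nonneg (sin y)]
        exact ptup (m * sin y^2) h0x h2x
      have hval : ∫ y in (0:ℝ)..(π/2), (1 + (m*sin y^2)/2 + 3*(m*sin y^2)^2/8
          + 5*(m*sin y^2)^3/16 + 35*(m*sin y^2)^4/64)
          = π/2 * (1 + m/4 + 9*m^2/64 + 25*m^3/256 + 1225*m^4/8192) := by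
        rw [integral_congr (g := fun y => 1 + (m/2) * sin y^2 + (3*m^2/8) * sin y^4
            + (5*m^3/16) * sin y^6 + (35*m^4/64) * sin y^8) (fun y _ => by ring),
          intpoly]
        ring
      linarith [hmono, hval.le, hval.ge]
    have hEb : π/2 * (1 - m/4 - 3*m^2/64 - 5*m^3/256 - 175*m^4/8192) ≤ E := by
      have hmono : (∫ y in (0:ℝ)..(π/2), (1 - (m*sin y^2)/2 - (m*sin y^2)^2/8
          - (m*sin y^2)^3/16 - 5*(m*sin y^2)^4/64)) ≤ E := by
        rw [hEint]
        apply integral_mono_on hab (by apply Continuous.intervalIntegrable; fun_prop) hiE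
        intro y _
        have h0x : 0 ≤ m * sin y^2 := by positivity
        have h2x : 2*(m * sin y^2) ≤ 1 := by nlinarith [sin_sq_le_one y, sq_nonneg (sin y)]
        exact ptlow (m * sin y^2) h0x h2x
      have hval : ∫ y in (0:ℝ)..(π/2), (1 - (m*sin y^2)/2 - (m*sin y^2)^2/8
          - (m*sin y^2)^3/16 - 5*(m*sin y^2)^4/64)
          = π/2 * (1 - m/4 - 3*m^2/64 - 5*m^3/256 - 175*m^4/8192) := by
        rw [integral_congr (g := fun y => 1 + (-(m/2)) * sin y^2 + (-(m^2/8)) * sin y^4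
            + (-(m^3/16)) * sin y^6 + (-(5*m^4/64)) * sin y^8) (fun y _ => by ring),
          intpoly]
        ring
      linarith [hmono, hval.le, hval.ge]
    set Pm : ℝ := 1 + m/4 + 9*m^2/64 + 25*m^3/256 + 1225*m^4/8192 with hPm
    set Qm : ℝ := 1 - m/4 - 3*m^2/64 - 5*m^3/256 - 175*m^4/8192 with hQm
    have hA : (7-2*m) * Pm ≤ 9 * Qm := by
      rw [hPm, hQm]; exact certA m hm0.le hm2
    have hB : (4*m^2-10*m+4) * Pm^2 ≤ (9 * Qm - (7-2*m) * Pm)^2 := by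
      rw [hPm, hQm]; exact certB m hm0.le hm2
    have h72 : (0:ℝ) < 7 - 2*m := by linarith
    have hpi : (0:ℝ) < π/2 := by positivity
    -- key2 : (7-2m) K ≤ 9 E
    have key2 : (7-2*m) * K ≤ 9 * E := by
      calc (7-2*m) * K ≤ (7-2*m) * (π/2 * Pm) := by
            apply mul_le_mul_of_nonneg_left hKb h72.le
        _ = π/2 * ((7-2*m) * Pm) := by ring
        _ ≤ π/2 * (9 * Qm) := by apply mul_le_mul_of_nonneg_left hA hpi.le
        _ = 9 * (π/2 * Qm) := by ring
        _ ≤ 9 * E := by linarith [hEb]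
    -- key3
    have hdisc : (0:ℝ) ≤ 4*m^2 - 10*m + 4 := by nlinarith
    have hPpos : (0:ℝ) < Pm := by rw [hPm]; positivity
    have hgap : π/2 * (9 * Qm - (7-2*m) * Pm) ≤ 9*E - (7-2*m)*K := by
      have h9E : π/2 * (9 * Qm) ≤ 9 * E := by linarith [hEb]
      have h7K : (7-2*m) * K ≤ π/2 * ((7-2*m) * Pm) := by
        calc (7-2*m) * K ≤ (7-2*m) * (π/2 * Pm) := mul_le_mul_of_nonneg_left hKb h72.le
          _ = π/2 * ((7-2*m) * Pm) := by ring
      nlinarith [h9E, h7K]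
    have hgap0 : (0:ℝ) ≤ π/2 * (9 * Qm - (7-2*m) * Pm) := by
      apply mul_nonneg hpi.le
      linarith [hA]
    have key3 : (4*m^2-10*m+4) * K^2 ≤ (9*E - (7-2*m)*K)^2 := by
      have hK2 : K^2 ≤ (π/2 * Pm)^2 := by
        exact pow_le_pow_left₀ hKpos.le hKb 2
      have h1 : (4*m^2-10*m+4) * K^2 ≤ (4*m^2-10*m+4) * (π/2 * Pm)^2 :=
        mul_le_mul_of_nonneg_left hK2 hdisc
      have h2 : (4*m^2-10*m+4) * (π/2 * Pm)^2 ≤ (π/2 * (9 * Qm - (7-2*m) * Pm))^2 := by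
        have := mul_le_mul_of_nonneg_left hB (by positivity : (0:ℝ) ≤ (π/2)^2)
        calc (4*m^2-10*m+4) * (π/2 * Pm)^2
            = (π/2)^2 * ((4*m^2-10*m+4) * Pm^2) := by ring
          _ ≤ (π/2)^2 * ((9 * Qm - (7-2*m) * Pm)^2) := this
          _ = (π/2 * (9 * Qm - (7-2*m) * Pm))^2 := by ring
      have h3 : (π/2 * (9 * Qm - (7-2*m) * Pm))^2 ≤ (9*E - (7-2*m)*K)^2 := by
        apply pow_le_pow_left₀ hgap0 hgap 2
      linarith
    -- conclude
    set u : ℝ := E / K with hu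
    have hEuK : E = u * K := by rw [hu]; field_simp
    have hsq : (9*u + 2*m - 7)^2 * K^2 = (9*E - (7-2*m)*K)^2 := by
      rw [hEuK]; ring
    have h5 : (4*m^2-10*m+4) * K^2 ≤ (9*u + 2*m - 7)^2 * K^2 := by
      rw [hsq]; exact key3
    have h6 : (4*m^2-10*m+4) ≤ (9*u + 2*m - 7)^2 :=
      le_of_mul_le_mul_right h5 (by positivity)
    linarith [h6]
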